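/- Let f : ℝ^d → ℝ be convex and twice differentiable with minimizer x⋆, and let X solve X''(t) + (3/t) X'(t) + ∇f(X t) = 0. Then d/dt [t²(f(X t) - f⋆) + 2‖(X t - x⋆) + (t/2)X'(t)‖²] = 2t (f(X t) - f⋆ - ⟪∇f(X t), X t - x⋆⟫), which is ≤ 0 by convexity. -/

import Mathlib

open scoped RealInnerProductSpace
open Real Set

theorem accelerated_gradient_flow_lyapunov_derivative
    (d : ℕ) (f : EuclideanSpace ℝ (Fin d) → ℝ) (hf : ContDiff ℝ 2 f)
    (hconv : ∀ x y, f y ≥ f x + ⟪gradient f x, y - x⟫)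
    (xstar : EuclideanSpace ℝ (Fin d)) (hmin : ∀ y, f xstar ≤ f y)
    (X X' X'' : ℝ → EuclideanSpace ℝ (Fin d))
    (hX : ∀ t ∈ Set.Ioi (0 : ℝ), HasDerivAt X (X' t) t)
    (hX' : ∀ t ∈ Set.Ioi (0 : ℝ), HasDerivAt X' (X'' t) t)
    (hODE : ∀ t ∈ Set.Ioi (0 : ℝ),
      X'' t + (3 / t) • X' t + gradient f (X t) = 0) :
    ∀ t ∈ Set.Ioi (0 : ℝ),
      deriv (fun s => s ^ 2 * (f (X s) - f xstar)
          + 2 * ‖(X s - xstar) + (s / 2) • X' s‖ ^ 2) t =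
        2 * t * (f (X t) - f xstar - ⟪gradient f (X t), X t - xstar⟫) ∧
      2 * t * (f (X t) - f xstar - ⟪gradient f (X t), X t - xstar⟫) ≤ 0 := by
  intro t ht
  have ht0 : (0 : ℝ) < t := ht
  have htne : t ≠ 0 := ne_of_gt ht0
  set g := gradient f (X t) with hg
  -- derivative of f ∘ X
  have hfd : DifferentiableAt ℝ f (X t) :=
    (hf.differentiable (by norm_num)).differentiableAt
  have hgrad : HasGradientAt f g (X t) := hfd.hasGradientAt
  have hdf : HasDerivAt (fun s => f (X s)) ⟪g, X' t⟫ t := by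
    have := hgrad.hasFDerivAt.comp_hasDerivAt t (hX t ht)
    simpa [Function.comp_def] using this
  have hterm1 : HasDerivAt (fun s => s ^ 2 * (f (X s) - f xstar))
      ((2 * t ^ 1) * (f (X t) - f xstar) + t ^ 2 * ⟪g, X' t⟫) t := by
    have := (hasDerivAt_pow 2 t).mul (hdf.sub_const (f xstar))
    exact this.congr_deriv (by simp)
  -- the Y term
  set Y : ℝ → EuclideanSpace ℝ (Fin d) := fun s => (X s - xstar) + (s / 2) • X' s with hY
  have hXdd : X'' t = -((3 / t) • X' t + g) := by
    have h := hODE t ht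
    rw [add_assoc] at h
    exact eq_neg_of_add_eq_zero_left h
  have hYd : HasDerivAt Y ((-(t / 2)) • g) t := by
    have h1 : HasDerivAt Y ((X' t - 0) + ((t / 2) • X'' t + ((1 : ℝ) / 2) • X' t)) t := by
      exact ((hX t ht).sub_const xstar).add
        ((((hasDerivAt_id t).div_const 2)).smul (hX' t ht)) |>.congr_deriv (by simp)
    convert h1 using 1
    rw [hXdd]
    match_scalars <;> field_simp <;> ring
  have hinner : HasDerivAt (fun s => ⟪Y s, Y s⟫)
      (⟪Y t, (-(t / 2)) • g⟫ + ⟪(-(t / 2)) • g, Y t⟫) t := hYd.inner ℝ hYd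
  have hE : HasDerivAt (fun s => s ^ 2 * (f (X s) - f xstar) + 2 * ⟪Y s, Y s⟫)
      (((2 * t ^ 1) * (f (X t) - f xstar) + t ^ 2 * ⟪g, X' t⟫)
        + 2 * (⟪Y t, (-(t / 2)) • g⟫ + ⟪(-(t / 2)) • g, Y t⟫)) t :=
    hterm1.add (hinner.const_mul 2)
  have hfun : (fun s => s ^ 2 * (f (X s) - f xstar)
      + 2 * ‖(X s - xstar) + (s / 2) • X' s‖ ^ 2)
      = (fun s => s ^ 2 * (f (X s) - f xstar) + 2 * ⟪Y s, Y s⟫) := by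
    funext s
    rw [hY, real_inner_self_eq_norm_sq]
  constructor
  · rw [hfun, hE.deriv, hY]
    simp only [inner_add_right, inner_add_left, real_inner_smul_left,
      real_inner_smul_right, inner_sub_right, inner_sub_left, real_inner_comm g (X t)]
    ring_nf
    rw [real_inner_comm (X' t) g, real_inner_comm xstar g, real_inner_comm (X t) g]
    ring
  · have h := hconv (X t) xstar
    have h2 : ⟪g, xstar - X t⟫ = -⟪g, X t - xstar⟫ := by
      rw [← inner_neg_right]; congr 1; abel
    rw [h2] at h
    nlinarith [ht0.le]
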